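/- Let (I,(·,·)) be a Cartan datum, let i ∈ I, let r ≥ 2 be an integer, and let S ⊆ I ∖ {i} be a nonempty subset such that (α_j,α_{j'}) = 0 for all distinct j, j' ∈ S and such that a_{ij} = 1 − r for every j ∈ S. Set n − 1 = |S| and L = (n−1)(r−1) + 1, and fix any enumeration j_1, …, j_{n−1} of S. Then the identity Σ_{k=0}^{L} (−1)^k [L ¦ k]_{d_i} · f_i^k · f_{j_1} f_{j_2} ⋯ f_{j_{n−1}} · f_i^{L−k} = 0 holds in U_q^-. -/

import Mathlib

noncomputable section

open Finset

/-- The field `ℚ(q)` of rational functions. -/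
abbrev K : Type := RatFunc ℚ

/-- The variable `q`. -/
def q : K := RatFunc.X

/-- The balanced `q`-integer `[n]_d = (q^{dn} - q^{-dn})/(q^d - q^{-d})`. -/
def qintd (d : ℤ) (n : ℤ) : K := (q ^ (d * n) - q ^ (-(d * n))) / (q ^ d - q ^ (-d))

/-- The `q`-factorial `[m]_d^! = [1]_d ⋯ [m]_d`. -/
def qfactd (d : ℤ) (m : ℕ) : K := ∏ t ∈ Finset.range m, qintd d (t + 1)

/-- The `q`-binomial coefficient `[n ¦ m]_d = [n]_d ⋯ [n-m+1]_d/[m]_d^!`. -/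
def qbinomd (d : ℤ) (n : ℤ) (m : ℕ) : K := (∏ t ∈ Finset.range m, qintd d (n - t)) / qfactd d m

variable {I : Type} [Fintype I] [DecidableEq I]

/-- `d_i = (α_i,α_i)/2`. -/
def dd (form : I → I → ℤ) (i : I) : ℤ := form i i / 2

/-- `a_{ij} = 2(α_i,α_j)/(α_i,α_i)`. -/
def aij (form : I → I → ℤ) (i j : I) : ℤ := 2 * form i j / form i i

/-- The quantum Serre element
`Σ_{k=0}^{1−a_{ij}} (−1)^k [1−a_{ij} ¦ k]_{d_i} f_i^k f_j f_i^{1−a_{ij}−k}`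
in the free algebra. -/
def serre (form : I → I → ℤ) (i j : I) : FreeAlgebra K I :=
  ∑ k ∈ Finset.range ((1 - aij form i j).toNat + 1),
    ((-1 : K) ^ k * qbinomd (dd form i) (1 - aij form i j) k) •
      ((FreeAlgebra.ι K i) ^ k * FreeAlgebra.ι K j *
        (FreeAlgebra.ι K i) ^ ((1 - aij form i j).toNat - k))

/-- The relation imposing the quantum Serre relations. -/
def serreRel (form : I → I → ℤ) : FreeAlgebra K I → FreeAlgebra K I → Prop :=
  fun x y => ∃ i j, i ≠ j ∧ x = serre form i j ∧ y = 0

/-- The negative part `U_q^-` of the quantized enveloping algebra: the quotient of the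
free associative `ℚ(q)`-algebra on the `f_i` by the quantum Serre relations. -/
abbrev Uneg (form : I → I → ℤ) : Type := RingQuot (serreRel form)

/-- The generator `f_i` of `U_q^-`. -/
def fgen (form : I → I → ℤ) (i : I) : Uneg form :=
  RingQuot.mkAlgHom K (serreRel form) (FreeAlgebra.ι K i)

lemma q_ne_zero : q ≠ 0 := RatFunc.X_ne_zero

lemma q_pow_ne_one {n : ℕ} (hn : n ≠ 0) : q ^ (n : ℕ) ≠ (1 : K) := by
  intro h
  have : (Polynomial.X : Polynomial ℚ) ^ n = 1 := by
    apply RatFunc.algebraMap_injective ℚ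
    simpa [q, map_pow, RatFunc.algebraMap_X] using h
  have := congrArg Polynomial.natDegree this
  simp [Polynomial.natDegree_X_pow] at this
  exact hn this

lemma q_zpow_inj {a b : ℤ} (h : q ^ a = q ^ b) : a = b := by
  by_contra hne
  wlog hab : a < b generalizing a b
  · exact this h.symm (Ne.symm hne) (by omega)
  have h1 : q ^ (b - a) = 1 := by
    have := congrArg (· * q ^ (-a)) h
    simp only [← zpow_add₀ q_ne_zero] at this
    simpa [add_neg_cancel, sub_eq_add_neg] using this.symm
  have hba : (0:ℤ) < b - a := by omega
  rw [show b - a = ((b - a).toNat : ℤ) by omega, zpow_natCast] at h1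
  exact q_pow_ne_one (by omega) h1

lemma q_zpow_ne_one {a : ℤ} (ha : a ≠ 0) : q ^ a ≠ (1 : K) := by
  intro h
  exact ha (q_zpow_inj (by simpa using h))

lemma qintd_ne_zero {d : ℤ} (hd : 0 < d) {n : ℤ} (hn : n ≠ 0) : qintd d n ≠ 0 := by
  have hden : q ^ d - q ^ (-d) ≠ 0 := by
    intro h
    have : q ^ d = q ^ (-d) := by linear_combination h
    have := q_zpow_inj this
    omega
  have hnum : q ^ (d * n) - q ^ (-(d * n)) ≠ 0 := by
    intro h
    have : q ^ (d * n) = q ^ (-(d * n)) := by linear_combination h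
    have := q_zpow_inj this
    have : d * n = 0 := by omega
    rcases mul_eq_zero.1 this with h | h <;> omega
  exact div_ne_zero hnum hden

lemma qintd_zero (d : ℤ) : qintd d 0 = 0 := by simp [qintd]

lemma qfactd_ne_zero {d : ℤ} (hd : 0 < d) (m : ℕ) : qfactd d m ≠ 0 := by
  apply Finset.prod_ne_zero_iff.2
  intro t _
  exact qintd_ne_zero hd (by positivity)

lemma qbinomd_zero_right (d : ℤ) (n : ℤ) : qbinomd d n 0 = 1 := by
  simp [qbinomd, qfactd]

lemma qintd_pascal {d : ℤ} (hd : 0 < d) (n k : ℤ) :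
    qintd d (n + 1) = q ^ (-(d * k)) * qintd d (n - k + 1) + q ^ (d * (n + 1 - k)) * qintd d k := by
  unfold qintd
  rw [← mul_div_assoc, ← mul_div_assoc, ← add_div]
  congr 1
  have e : ∀ a b : ℤ, q ^ a * q ^ b = q ^ (a + b) := fun a b => (zpow_add₀ q_ne_zero a b).symm
  rw [mul_sub, mul_sub, e, e, e, e]
  rw [show -(d * k) + d * (n - k + 1) = d * (n + 1) - 2 * (d * k) by ring,
      show -(d * k) + -(d * (n - k + 1)) = -(d * (n + 1)) by ring,
      show d * (n + 1 - k) + d * k = d * (n + 1) by ring,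
      show d * (n + 1 - k) + -(d * k) = d * (n + 1) - 2 * (d * k) by ring]
  ring

lemma qbinomd_pascal {d : ℤ} (hd : 0 < d) (n : ℤ) (k : ℕ) :
    qbinomd d (n + 1) (k + 1)
      = q ^ (-(d * (k + 1 : ℕ))) * qbinomd d n (k + 1) + q ^ (d * (n - k)) * qbinomd d n k := by
  have hfk : qfactd d k ≠ 0 := qfactd_ne_zero hd k
  have hk1 : qintd d ((k:ℤ) + 1) ≠ 0 := qintd_ne_zero hd (by omega)
  have hfs : qfactd d (k+1) = qfactd d k * qintd d ((k:ℤ)+1) := by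
    rw [qfactd, Finset.prod_range_succ]; rfl
  have key := qintd_pascal hd n ((k:ℤ) + 1)
  have hP1 : ∏ t ∈ Finset.range (k+1), qintd d (n + 1 - t)
      = (∏ t ∈ Finset.range k, qintd d (n - t)) * qintd d (n + 1) := by
    rw [Finset.prod_range_succ']
    congr 1
    · apply Finset.prod_congr rfl; intro t _; congr 1; push_cast; ring
    · congr 1; push_cast; ring
  have hP2 : ∏ t ∈ Finset.range (k+1), qintd d (n - t)
      = (∏ t ∈ Finset.range k, qintd d (n - t)) * qintd d (n - k) := by
    rw [Finset.prod_range_succ]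
  unfold qbinomd
  rw [hP1, hP2, hfs, key]
  have hcast : ((k+1 : ℕ) : ℤ) = (k : ℤ) + 1 := by push_cast; ring
  rw [hcast, show n - ((k:ℤ)+1) + 1 = n - k by ring]
  have hq1 : q ^ (d*((k:ℤ)+1)) ≠ 0 := zpow_ne_zero _ q_ne_zero
  simp only [zpow_neg]
  field_simp
  ring

lemma qbinomd_overflow (d : ℤ) (M : ℕ) : qbinomd d M (M+1) = 0 := by
  unfold qbinomd
  rw [Finset.prod_eq_zero (Finset.self_mem_range_succ M)]
  · simp
  · rw [sub_self, qintd_zero]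

lemma qbinom_thm {R : Type} [CommRing R] [Algebra K R] {d : ℤ} (hd : 0 < d) (M : ℕ) (u v : R) :
    ∏ s ∈ Finset.range M, (v - (q ^ (d * ((M:ℤ) - 1 - 2*(s:ℤ))) : K) • u)
      = ∑ k ∈ Finset.range (M+1), ((-1:K)^k * qbinomd d M k) • (u^k * v^(M-k)) := by
  induction M generalizing u with
  | zero => simp [qbinomd_zero_right]
  | succ M ih =>
    have hprod : ∏ s ∈ Finset.range (M+1), (v - (q ^ (d * (((M+1:ℕ):ℤ) - 1 - 2*(s:ℤ))) : K) • u)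
        = (∏ s ∈ Finset.range M, (v - (q ^ (d * ((M:ℤ) - 1 - 2*(s:ℤ))) : K) • ((q^(-d):K) • u)))
          * (v - (q ^ (d * (M:ℤ)) : K) • u) := by
      rw [Finset.prod_range_succ']
      congr 1
      · apply Finset.prod_congr rfl
        intro s _
        rw [smul_smul, ← zpow_add₀ q_ne_zero]
        congr 2
        push_cast; ring
      · congr 2
        push_cast; ring
    rw [hprod, ih ((q^(-d):K) • u)]
    have e1 : ∀ k : ℕ, ((q^(-d):K) • u)^k = (q^(-(d*(k:ℤ))):K) • u^k := by
      intro k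
      rw [smul_pow]
      congr 1
      rw [← zpow_natCast (q ^ (-d)) k, ← zpow_mul]
      congr 1
      push_cast; ring
    have pre : ∀ k : ℕ, ((-1:K)^k * qbinomd d M k) • (((q^(-d):K) • u)^k * v^(M-k))
        = ((-1:K)^k * qbinomd d M k * q^(-(d*(k:ℤ)))) • (u^k * v^(M-k)) := by
      intro k
      rw [e1, smul_mul_assoc, smul_smul]
    simp only [pre]
    rw [Finset.sum_mul]
    have step : ∀ k ∈ Finset.range (M+1),
        (((-1:K)^k * qbinomd d M k * q^(-(d*(k:ℤ)))) • (u^k * v^(M-k))) * (v - (q ^ (d * (M:ℤ)) : K) • u)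
        = ((-1:K)^k * qbinomd d M k * q^(-(d*(k:ℤ)))) • (u^k * v^(M+1-k))
          - ((-1:K)^k * qbinomd d M k * q^(-(d*(k:ℤ))) * q^(d*(M:ℤ))) • (u^(k+1) * v^(M-k)) := by
      intro k hk
      rw [mul_sub]
      congr 1
      · rw [smul_mul_assoc, mul_assoc (u^k) (v^(M-k)) v, ← pow_succ]
        simp only [Finset.mem_range] at hk
        have h2 : M - k + 1 = M + 1 - k := by omega
        rw [h2]
      · rw [smul_mul_assoc, mul_smul_comm, smul_smul, mul_right_comm (u^k) (v^(M-k)) u, ← pow_succ]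
    rw [Finset.sum_congr rfl step, Finset.sum_sub_distrib]
    have hfirst : ∑ k ∈ Finset.range (M+1), ((-1:K)^k * qbinomd d M k * q^(-(d*(k:ℤ)))) • (u^k * v^(M+1-k))
        = ∑ k ∈ Finset.range (M+2), ((-1:K)^k * qbinomd d M k * q^(-(d*(k:ℤ)))) • (u^k * v^(M+1-k)) := by
      rw [Finset.sum_range_succ (n := M+1)]
      rw [qbinomd_overflow]
      simp
    have hsecond : ∑ k ∈ Finset.range (M+1), ((-1:K)^k * qbinomd d M k * q^(-(d*(k:ℤ))) * q^(d*(M:ℤ))) • (u^(k+1) * v^(M-k))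
        = ∑ k ∈ Finset.range (M+2),
            (if k = 0 then 0 else (-1:K)^(k-1) * qbinomd d M (k-1) * q^(-(d*((k:ℤ)-1))) * q^(d*(M:ℤ))) • (u^k * v^(M+1-k)) := by
      rw [Finset.sum_range_succ' _ (M+1)]
      norm_num
      apply Finset.sum_congr rfl
      intro k hk
      have h3 : M + 1 - (k + 1) = M - k := by omega
      rw [h3]
    rw [hfirst, hsecond, ← Finset.sum_sub_distrib]
    apply Finset.sum_congr rfl
    intro k hk
    rw [← sub_smul]
    congr 1
    rcases Nat.eq_zero_or_pos k with rfl | hkpos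
    · simp [qbinomd_zero_right]
    · obtain ⟨j, rfl⟩ : ∃ j, k = j + 1 := ⟨k - 1, by omega⟩
      simp only [if_neg (Nat.succ_ne_zero j), Nat.add_sub_cancel]
      have hp := qbinomd_pascal (d := d) hd (M : ℤ) j
      push_cast at hp ⊢
      rw [hp, pow_succ]
      ring_nf
      rw [zpow_add₀ q_ne_zero]
      ring

abbrev PK := Polynomial K
abbrev P2 := Polynomial PK
abbrev P3 := Polynomial P2

/-- the point `c·X` in `K[X]`. -/
def pt (c : K) : PK := Polynomial.C c * Polynomial.X
/-- `Y - c·X` in `K[X][Y]`. -/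
def linYX (c : K) : P2 := Polynomial.X - Polynomial.C (pt c)
/-- `Z - c·Y` in `K[X][Y][Z]`. -/
def linZY (c : K) : P3 :=
  Polynomial.X - Polynomial.C (Polynomial.C (Polynomial.C c) * Polynomial.X)
/-- `Z - c·X` in `K[X][Y][Z]`. -/
def linZX (c : K) : P3 := Polynomial.X - Polynomial.C (Polynomial.C (pt c))

lemma pt_inj {c c' : K} (h : pt c = pt c') : c = c' := by
  have := congrArg (fun p => Polynomial.coeff p 1) h
  simpa [pt] using this

lemma dvd_of_roots {D : Type*} [CommRing D] [IsDomain D] [DecidableEq D] (s : Finset D) (p : Polynomial D)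
    (h : ∀ a ∈ s, p.eval a = 0) : (∏ a ∈ s, (Polynomial.X - Polynomial.C a)) ∣ p := by
  induction s using Finset.induction_on generalizing p with
  | empty => simpa using one_dvd p
  | insert _ _ ha ih =>
    rename_i a s'
    obtain ⟨p₁, rfl⟩ := (Polynomial.dvd_iff_isRoot.2 (h a (Finset.mem_insert_self a s')))
    rw [Finset.prod_insert ha]
    apply mul_dvd_mul_left
    apply ih
    intro b hb
    have hba : b ≠ a := by rintro rfl; exact ha hb
    have := h b (Finset.mem_insert_of_mem hb)
    rw [Polynomial.eval_mul, Polynomial.eval_sub, Polynomial.eval_X, Polynomial.eval_C] at this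
    rcases mul_eq_zero.1 this with h0 | h0
    · exact absurd (sub_eq_zero.1 h0) hba
    · exact h0

lemma claimA {d : ℤ} (hd : 0 < d) (a b : ℕ) :
    ∃ Qp Sp : P3,
      (∏ t ∈ Finset.range (a+b+1), linZX (q ^ (d*((a:ℤ)+(b:ℤ)-2*(t:ℤ)))))
        = Qp * (∏ u ∈ Finset.range (b+1), linZY (q ^ (d*((b:ℤ)-2*(u:ℤ)))))
          + Sp * Polynomial.C (∏ t ∈ Finset.range (a+1), linYX (q ^ (d*((a:ℤ)-2*(t:ℤ))))) := by
  classical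
  set Bp : P3 := ∏ u ∈ Finset.range (b+1), linZY (q ^ (d*((b:ℤ)-2*(u:ℤ)))) with hBp
  set Cp : P3 := ∏ t ∈ Finset.range (a+b+1), linZX (q ^ (d*((a:ℤ)+(b:ℤ)-2*(t:ℤ)))) with hCp
  set Ap : P2 := ∏ t ∈ Finset.range (a+1), linYX (q ^ (d*((a:ℤ)-2*(t:ℤ)))) with hAp
  have hBmon : Bp.Monic := by
    apply Polynomial.monic_prod_of_monic
    intro u _
    exact Polynomial.monic_X_sub_C _
  have hdvd : Polynomial.C Ap ∣ (Cp %ₘ Bp) := by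
    rw [Polynomial.C_dvd_iff_dvd_coeff]
    intro n
    -- express Ap as a product over a Finset of points
    have hptinj : ∀ t ∈ Finset.range (a+1), ∀ t' ∈ Finset.range (a+1),
        pt (q ^ (d*((a:ℤ)-2*(t:ℤ)))) = pt (q ^ (d*((a:ℤ)-2*(t':ℤ)))) → t = t' := by
      intro t _ t' _ h
      have h1 := q_zpow_inj (pt_inj h)
      have h2 : (a:ℤ)-2*(t:ℤ) = (a:ℤ)-2*(t':ℤ) := mul_left_cancel₀ (by omega : d ≠ 0) h1
      omega
    have hApprod : Ap = ∏ x ∈ (Finset.range (a+1)).image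
        (fun t : ℕ => pt (q ^ (d*((a:ℤ)-2*(t:ℤ))))), (Polynomial.X - Polynomial.C x) := by
      rw [Finset.prod_image hptinj]
      simp only [hAp, linYX]
    rw [hApprod]
    apply dvd_of_roots
    intro x hx
    simp only [Finset.mem_image, Finset.mem_range] at hx
    obtain ⟨t0, ht0, rfl⟩ := hx
    set c : K := q ^ (d*((a:ℤ)-2*(t0:ℤ))) with hc
    set ev : P2 →+* PK := Polynomial.evalRingHom (pt c) with hev
    have key : (Cp %ₘ Bp).map ev = 0 := by
      rw [Polynomial.map_modByMonic _ hBmon]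
      rw [Polynomial.modByMonic_eq_zero_iff_dvd (hBmon.map ev)]
      -- compute the two mapped products
      have hBmap : Bp.map ev = ∏ u ∈ Finset.range (b+1),
          (Polynomial.X - Polynomial.C (pt (q ^ (d*((b:ℤ)-2*(u:ℤ)+((a:ℤ)-2*(t0:ℤ))))))) := by
        rw [hBp, Polynomial.map_prod]
        apply Finset.prod_congr rfl
        intro u _
        rw [linZY, Polynomial.map_sub, Polynomial.map_X, Polynomial.map_C]
        congr 1
        rw [hev]
        simp only [Polynomial.coe_evalRingHom, Polynomial.eval_mul, Polynomial.eval_C, Polynomial.eval_X]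
        rw [pt, pt, hc]
        rw [show Polynomial.C (q ^ (d*((b:ℤ)-2*(u:ℤ)))) * (Polynomial.C (q ^ (d*((a:ℤ)-2*(t0:ℤ)))) * Polynomial.X)
            = Polynomial.C (q ^ (d*((b:ℤ)-2*(u:ℤ))) * q ^ (d*((a:ℤ)-2*(t0:ℤ)))) * Polynomial.X by
          rw [map_mul]; ring]
        rw [← zpow_add₀ q_ne_zero]
        congr 2
        ring
      have hCmap : Cp.map ev = ∏ t ∈ Finset.range (a+b+1),
          (Polynomial.X - Polynomial.C (pt (q ^ (d*((a:ℤ)+(b:ℤ)-2*(t:ℤ)))))) := by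
        rw [hCp, Polynomial.map_prod]
        apply Finset.prod_congr rfl
        intro t _
        rw [linZX, Polynomial.map_sub, Polynomial.map_X, Polynomial.map_C]
        congr 1
        rw [hev]
        simp only [Polynomial.coe_evalRingHom, Polynomial.eval_C]
      rw [hBmap, hCmap]
      -- divisibility of products over images in ℤ
      have hinj1 : ∀ u ∈ Finset.range (b+1), ∀ u' ∈ Finset.range (b+1),
          (b:ℤ)-2*(u:ℤ)+((a:ℤ)-2*(t0:ℤ)) = (b:ℤ)-2*(u':ℤ)+((a:ℤ)-2*(t0:ℤ)) → u = u' := by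
        intro u _ u' _ h; omega
      have hinj2 : ∀ t ∈ Finset.range (a+b+1), ∀ t' ∈ Finset.range (a+b+1),
          (a:ℤ)+(b:ℤ)-2*(t:ℤ) = (a:ℤ)+(b:ℤ)-2*(t':ℤ) → t = t' := by
        intro t _ t' _ h; omega
      have e1 : (∏ u ∈ Finset.range (b+1),
            (Polynomial.X - Polynomial.C (pt (q ^ (d*((b:ℤ)-2*(u:ℤ)+((a:ℤ)-2*(t0:ℤ))))))))
          = ∏ z ∈ (Finset.range (b+1)).image (fun u : ℕ => (b:ℤ)-2*(u:ℤ)+((a:ℤ)-2*(t0:ℤ))),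
            (Polynomial.X - Polynomial.C (pt (q ^ (d*z)))) := by rw [Finset.prod_image hinj1]
      have e2 : (∏ t ∈ Finset.range (a+b+1),
            (Polynomial.X - Polynomial.C (pt (q ^ (d*((a:ℤ)+(b:ℤ)-2*(t:ℤ)))))))
          = ∏ z ∈ (Finset.range (a+b+1)).image (fun t : ℕ => (a:ℤ)+(b:ℤ)-2*(t:ℤ)),
            (Polynomial.X - Polynomial.C (pt (q ^ (d*z)))) := by rw [Finset.prod_image hinj2]
      rw [e1, e2]
      apply Finset.prod_dvd_prod_of_subset
      intro z hz
      simp only [Finset.mem_image, Finset.mem_range] at hz ⊢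
      obtain ⟨u, hu, rfl⟩ := hz
      exact ⟨u + t0, by omega, by push_cast; ring⟩
    have : ev ((Cp %ₘ Bp).coeff n) = 0 := by
      have := congrArg (fun p => Polynomial.coeff p n) key
      simpa [Polynomial.coeff_map] using this
    rw [hev] at this
    simp only [Polynomial.coe_evalRingHom] at this
    exact this
  obtain ⟨Sp, hS⟩ := hdvd
  refine ⟨Cp /ₘ Bp, Sp, ?_⟩
  conv_lhs => rw [← Polynomial.modByMonic_add_div Cp Bp]
  rw [hS]
  ring

-- ############ transfer to MvPolynomial
abbrev MvP := MvPolynomial (Fin 3) K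

def tr : P3 →+* MvP :=
  Polynomial.eval₂RingHom
    (Polynomial.eval₂RingHom
      (Polynomial.eval₂RingHom (algebraMap K MvP) (MvPolynomial.X 0))
      (MvPolynomial.X 1))
    (MvPolynomial.X 2)

lemma tr_linZX (c : K) : tr (linZX c) = MvPolynomial.X 2 - c • MvPolynomial.X 0 := by
  simp [tr, linZX, pt, MvPolynomial.smul_eq_C_mul, MvPolynomial.algebraMap_eq]

lemma tr_linZY (c : K) : tr (linZY c) = MvPolynomial.X 2 - c • MvPolynomial.X 1 := by
  simp [tr, linZY, MvPolynomial.smul_eq_C_mul, MvPolynomial.algebraMap_eq]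

lemma tr_C_linYX (c : K) : tr (Polynomial.C (linYX c)) = MvPolynomial.X 1 - c • MvPolynomial.X 0 := by
  simp [tr, linYX, pt, MvPolynomial.smul_eq_C_mul, MvPolynomial.algebraMap_eq]

-- ############ the evaluation map phi
section Phi
variable {A : Type} [Ring A] [Algebra K A]

def word (f x y : A) (α : Fin 3 →₀ ℕ) : A := f ^ (α 0) * x * f ^ (α 1) * y * f ^ (α 2)

def phi (f x y : A) : MvP →ₗ[K] A :=
  Module.Basis.constr (MvPolynomial.basisMonomials (Fin 3) K) K (word f x y)

lemma phi_monomial (f x y : A) (α : Fin 3 →₀ ℕ) (c : K) :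
    phi f x y (MvPolynomial.monomial α c) = c • word f x y α := by
  have h1 : (MvPolynomial.monomial α c : MvP) = c • MvPolynomial.monomial α (1:K) := by
    rw [MvPolynomial.smul_monomial, smul_eq_mul, mul_one]
  rw [h1, map_smul]
  congr 1
  have h2 : (MvPolynomial.monomial α (1:K) : MvP) = MvPolynomial.basisMonomials (Fin 3) K α := by
    rw [MvPolynomial.coe_basisMonomials]
  rw [h2, phi, Module.Basis.constr_basis]

/-- the higher-order Serre property -/
def Hrel (d : ℤ) (f x : A) (N : ℕ) : Prop :=
  ∀ a b : ℕ, ∑ k ∈ Finset.range (N+1),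
    ((-1:K)^k * qbinomd d (N:ℤ) k) • (f^(a+k) * x * f^(b+(N-k))) = 0

lemma phi_mul_A {d : ℤ} (hd : 0 < d) (f x y : A) (N : ℕ) (hx : Hrel d f x N) (P : MvP) :
    phi f x y (P * ∏ s ∈ Finset.range N,
      (MvPolynomial.X 1 - (q ^ (d * ((N:ℤ) - 1 - 2*(s:ℤ))) : K) • MvPolynomial.X 0)) = 0 := by
  have hmono : ∀ α : Fin 3 →₀ ℕ, phi f x y (MvPolynomial.monomial α 1 * ∏ s ∈ Finset.range N,
      (MvPolynomial.X 1 - (q ^ (d * ((N:ℤ) - 1 - 2*(s:ℤ))) : K) • MvPolynomial.X 0)) = 0 := by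
    intro α
    rw [qbinom_thm hd N (MvPolynomial.X 0) (MvPolynomial.X 1), Finset.mul_sum]
    have hterm : ∀ k ∈ Finset.range (N+1),
        MvPolynomial.monomial α (1:K) * (((-1:K)^k * qbinomd d (N:ℤ) k) • ((MvPolynomial.X (0 : Fin 3) : MvP)^k * (MvPolynomial.X 1 : MvP)^(N-k)))
        = ((-1:K)^k * qbinomd d (N:ℤ) k) • MvPolynomial.monomial (α + (Finsupp.single 0 k + Finsupp.single 1 (N-k))) (1:K) := by
      intro k _
      rw [mul_smul_comm]
      congr 1
      rw [MvPolynomial.X_pow_eq_monomial, MvPolynomial.X_pow_eq_monomial,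
        MvPolynomial.monomial_mul, MvPolynomial.monomial_mul, one_mul, one_mul]
    rw [Finset.sum_congr rfl hterm, map_sum]
    have hterm2 : ∀ k ∈ Finset.range (N+1),
        phi f x y (((-1:K)^k * qbinomd d (N:ℤ) k) • MvPolynomial.monomial (α + (Finsupp.single 0 k + Finsupp.single 1 (N-k))) (1:K))
        = (((-1:K)^k * qbinomd d (N:ℤ) k) • (f^(α 0+k) * x * f^(α 1+(N-k)))) * (y * f^(α 2)) := by
      intro k _
      rw [map_smul, phi_monomial, one_smul, word]
      have e0 : (α + (Finsupp.single 0 k + Finsupp.single 1 (N-k)) : Fin 3 →₀ ℕ) 0 = α 0 + k := by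
        simp [Finsupp.single_apply]
      have e1 : (α + (Finsupp.single 0 k + Finsupp.single 1 (N-k)) : Fin 3 →₀ ℕ) 1 = α 1 + (N-k) := by
        simp [Finsupp.single_apply]
      have e2 : (α + (Finsupp.single 0 k + Finsupp.single 1 (N-k)) : Fin 3 →₀ ℕ) 2 = α 2 := by
        simp [Finsupp.single_apply]
      rw [e0, e1, e2, smul_mul_assoc, ← mul_assoc]
    rw [Finset.sum_congr rfl hterm2, ← Finset.sum_mul, hx (α 0) (α 1), zero_mul]
  rw [MvPolynomial.as_sum P, Finset.sum_mul, map_sum]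
  apply Finset.sum_eq_zero
  intro α hα
  have h1 : (MvPolynomial.monomial α (MvPolynomial.coeff α P) : MvP)
      = (MvPolynomial.coeff α P) • MvPolynomial.monomial α (1:K) := by
    rw [MvPolynomial.smul_monomial, smul_eq_mul, mul_one]
  rw [h1, smul_mul_assoc, map_smul, hmono, smul_zero]

lemma phi_mul_B {d : ℤ} (hd : 0 < d) (f x y : A) (r : ℕ) (hy : Hrel d f y r) (P : MvP) :
    phi f x y (P * ∏ s ∈ Finset.range r,
      (MvPolynomial.X 2 - (q ^ (d * ((r:ℤ) - 1 - 2*(s:ℤ))) : K) • MvPolynomial.X 1)) = 0 := by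
  have hmono : ∀ α : Fin 3 →₀ ℕ, phi f x y (MvPolynomial.monomial α 1 * ∏ s ∈ Finset.range r,
      (MvPolynomial.X 2 - (q ^ (d * ((r:ℤ) - 1 - 2*(s:ℤ))) : K) • MvPolynomial.X 1)) = 0 := by
    intro α
    rw [qbinom_thm hd r (MvPolynomial.X 1) (MvPolynomial.X 2), Finset.mul_sum]
    have hterm : ∀ k ∈ Finset.range (r+1),
        MvPolynomial.monomial α (1:K) * (((-1:K)^k * qbinomd d (r:ℤ) k) • ((MvPolynomial.X (1 : Fin 3) : MvP)^k * (MvPolynomial.X 2 : MvP)^(r-k)))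
        = ((-1:K)^k * qbinomd d (r:ℤ) k) • MvPolynomial.monomial (α + (Finsupp.single 1 k + Finsupp.single 2 (r-k))) (1:K) := by
      intro k _
      rw [mul_smul_comm]
      congr 1
      rw [MvPolynomial.X_pow_eq_monomial, MvPolynomial.X_pow_eq_monomial,
        MvPolynomial.monomial_mul, MvPolynomial.monomial_mul, one_mul, one_mul]
    rw [Finset.sum_congr rfl hterm, map_sum]
    have hterm2 : ∀ k ∈ Finset.range (r+1),
        phi f x y (((-1:K)^k * qbinomd d (r:ℤ) k) • MvPolynomial.monomial (α + (Finsupp.single 1 k + Finsupp.single 2 (r-k))) (1:K))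
        = (f^(α 0) * x) * (((-1:K)^k * qbinomd d (r:ℤ) k) • (f^(α 1+k) * y * f^(α 2+(r-k)))) := by
      intro k _
      rw [map_smul, phi_monomial, one_smul, word]
      have e0 : (α + (Finsupp.single 1 k + Finsupp.single 2 (r-k)) : Fin 3 →₀ ℕ) 0 = α 0 := by
        simp [Finsupp.single_apply]
      have e1 : (α + (Finsupp.single 1 k + Finsupp.single 2 (r-k)) : Fin 3 →₀ ℕ) 1 = α 1 + k := by
        simp [Finsupp.single_apply]
      have e2 : (α + (Finsupp.single 1 k + Finsupp.single 2 (r-k)) : Fin 3 →₀ ℕ) 2 = α 2 + (r-k) := by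
        simp [Finsupp.single_apply]
      rw [e0, e1, e2, mul_smul_comm]
      simp only [← mul_assoc]
    rw [Finset.sum_congr rfl hterm2, ← Finset.mul_sum, hy (α 1) (α 2), mul_zero]
  rw [MvPolynomial.as_sum P, Finset.sum_mul, map_sum]
  apply Finset.sum_eq_zero
  intro α hα
  have h1 : (MvPolynomial.monomial α (MvPolynomial.coeff α P) : MvP)
      = (MvPolynomial.coeff α P) • MvPolynomial.monomial α (1:K) := by
    rw [MvPolynomial.smul_monomial, smul_eq_mul, mul_one]
  rw [h1, smul_mul_assoc, map_smul, hmono, smul_zero]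

lemma main_step {d : ℤ} (hd : 0 < d) (f x y : A) (p s : ℕ)
    (hx : Hrel d f x (p+1)) (hy : Hrel d f y (s+1)) : Hrel d f (x*y) (p+s+1) := by
  intro a c
  obtain ⟨Qp, Sp, hQS⟩ := claimA (d := d) hd p s
  have htr := congrArg tr hQS
  rw [map_add, map_mul, map_mul] at htr
  have hCprod : tr (∏ t ∈ Finset.range (p+s+1), linZX (q ^ (d*((p:ℤ)+(s:ℤ)-2*(t:ℤ)))))
      = ∏ t ∈ Finset.range (p+s+1),
        (MvPolynomial.X 2 - (q ^ (d * (((p+s+1:ℕ):ℤ) - 1 - 2*(t:ℤ))) : K) • MvPolynomial.X 0) := by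
    rw [map_prod]
    apply Finset.prod_congr rfl
    intro t _
    rw [tr_linZX]
    congr 3
    push_cast; ring
  have hBprod : tr (∏ u ∈ Finset.range (s+1), linZY (q ^ (d*((s:ℤ)-2*(u:ℤ)))))
      = ∏ u ∈ Finset.range (s+1),
        (MvPolynomial.X 2 - (q ^ (d * (((s+1:ℕ):ℤ) - 1 - 2*(u:ℤ))) : K) • MvPolynomial.X 1) := by
    rw [map_prod]
    apply Finset.prod_congr rfl
    intro u _
    rw [tr_linZY]
    congr 3
    push_cast; ring
  have hAprod : tr (Polynomial.C (∏ t ∈ Finset.range (p+1), linYX (q ^ (d*((p:ℤ)-2*(t:ℤ))))))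
      = ∏ t ∈ Finset.range (p+1),
        (MvPolynomial.X 1 - (q ^ (d * (((p+1:ℕ):ℤ) - 1 - 2*(t:ℤ))) : K) • MvPolynomial.X 0) := by
    have hCp := map_prod (Polynomial.C : P2 →+* P3)
      (fun t : ℕ => linYX (q ^ (d*((p:ℤ)-2*(t:ℤ))))) (Finset.range (p+1))
    rw [hCp, map_prod]
    apply Finset.prod_congr rfl
    intro t _
    rw [tr_C_linYX]
    congr 3
    push_cast; ring
  rw [hCprod, hBprod, hAprod] at htr
  -- evaluate phi on both sides of htr multiplied by X0^a * X2^c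
  set P0 : MvP := (MvPolynomial.X 0 : MvP)^a * (MvPolynomial.X 2 : MvP)^c with hP0
  have hphiC : phi f x y (P0 * ∏ t ∈ Finset.range (p+s+1),
        (MvPolynomial.X 2 - (q ^ (d * (((p+s+1:ℕ):ℤ) - 1 - 2*(t:ℤ))) : K) • MvPolynomial.X 0))
      = ∑ k ∈ Finset.range ((p+s+1)+1),
          ((-1:K)^k * qbinomd d ((p+s+1:ℕ):ℤ) k) • (f^(a+k) * (x*y) * f^(c+((p+s+1)-k))) := by
    rw [qbinom_thm hd (p+s+1) (MvPolynomial.X 0) (MvPolynomial.X 2), Finset.mul_sum, map_sum]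
    apply Finset.sum_congr rfl
    intro k _
    have hmon : P0 * (((-1:K)^k * qbinomd d ((p+s+1:ℕ):ℤ) k) • ((MvPolynomial.X (0:Fin 3) : MvP)^k * (MvPolynomial.X 2 : MvP)^((p+s+1)-k)))
        = ((-1:K)^k * qbinomd d ((p+s+1:ℕ):ℤ) k) • MvPolynomial.monomial
            (Finsupp.single 0 (a+k) + Finsupp.single 2 (c+((p+s+1)-k))) (1:K) := by
      rw [mul_smul_comm]
      congr 1
      rw [hP0]
      rw [MvPolynomial.X_pow_eq_monomial, MvPolynomial.X_pow_eq_monomial,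
        MvPolynomial.X_pow_eq_monomial, MvPolynomial.X_pow_eq_monomial]
      simp only [MvPolynomial.monomial_mul, one_mul]
      congr 2
      ext i
      fin_cases i <;> simp [Finsupp.single_apply]
    rw [hmon, map_smul, phi_monomial, one_smul, word]
    have e0 : (Finsupp.single 0 (a+k) + Finsupp.single 2 (c+((p+s+1)-k)) : Fin 3 →₀ ℕ) 0 = a + k := by
      simp [Finsupp.single_apply]
    have e1 : (Finsupp.single 0 (a+k) + Finsupp.single 2 (c+((p+s+1)-k)) : Fin 3 →₀ ℕ) 1 = 0 := by
      simp [Finsupp.single_apply]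
    have e2 : (Finsupp.single 0 (a+k) + Finsupp.single 2 (c+((p+s+1)-k)) : Fin 3 →₀ ℕ) 2 = c+((p+s+1)-k) := by
      simp [Finsupp.single_apply]
    rw [e0, e1, e2, pow_zero, mul_one, mul_assoc (f^(a+k)) x y]
  rw [← hphiC, htr, mul_add, ← mul_assoc, ← mul_assoc, map_add,
    phi_mul_B hd f x y (s+1) hy, phi_mul_A hd f x y (p+1) hx, add_zero]

end Phi


-- ############ from Serre relations to Hrel, and the main induction
section Final
variable {I : Type} [Fintype I] [DecidableEq I]

lemma serre_to_Hrel (form : I → I → ℤ) (i j : I) (hij : i ≠ j) (r : ℕ)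
    (haij' : aij form i j = 1 - (r:ℤ)) :
    Hrel (A := Uneg form) (dd form i) (fgen form i) (fgen form j) r := by
  have h1 : (1 - aij form i j) = (r:ℤ) := by rw [haij']; ring
  have h2 : (1 - aij form i j).toNat = r := by rw [h1]; simp
  have hz : RingQuot.mkAlgHom K (serreRel form) (serre form i j) = 0 := by
    have hw : serreRel form (serre form i j) 0 := ⟨i, j, hij, rfl, rfl⟩
    have hz0 := RingQuot.mkAlgHom_rel K hw
    rwa [map_zero] at hz0
  rw [serre, h2, h1, map_sum] at hz
  intro a b
  have hz2 : ∑ k ∈ Finset.range (r+1), ((-1:K)^k * qbinomd (dd form i) (r:ℤ) k) •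
      ((fgen form i)^k * fgen form j * (fgen form i)^(r-k)) = 0 := by
    refine Eq.trans ?_ hz
    apply Finset.sum_congr rfl
    intro k _
    rw [map_smul, map_mul, map_mul, map_pow, map_pow]
    rfl
  have h3 := congrArg (fun z => (fgen form i)^a * z * (fgen form i)^b) hz2
  simp only [mul_zero, zero_mul] at h3
  rw [Finset.mul_sum, Finset.sum_mul] at h3
  refine Eq.trans ?_ h3
  apply Finset.sum_congr rfl
  intro k _
  rw [mul_smul_comm, smul_mul_assoc]
  congr 1
  rw [pow_add, show (fgen form i)^(b+(r-k)) = (fgen form i)^(r-k) * (fgen form i)^b from by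
    rw [pow_add, pow_mul_comm]]
  simp only [mul_assoc]

lemma list_Hrel (form : I → I → ℤ) (i : I) (hd : 0 < dd form i) (rr : ℕ)
    (l : List I) (hne : l ≠ [])
    (hall : ∀ j ∈ l, Hrel (dd form i) (fgen form i) (fgen form j) (rr+1)) :
    Hrel (A := Uneg form) (dd form i) (fgen form i) ((l.map (fgen form)).prod) (l.length * rr + 1) := by
  induction l with
  | nil => exact absurd rfl hne
  | cons j t ih =>
    rcases t with _ | ⟨j', t'⟩
    · simp only [List.map_cons, List.map_nil, List.prod_cons, List.prod_nil, mul_one,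
        List.length_cons, List.length_nil, Nat.zero_add, Nat.one_mul]
      exact hall j (by simp)
    · have ihh := ih (by simp) (fun j'' hj'' => hall j'' (List.mem_cons_of_mem _ hj''))
      have hstep := main_step hd (fgen form i) (fgen form j) (((j'::t').map (fgen form)).prod)
        rr ((j'::t').length * rr) (hall j (by simp)) ihh
      have hlen : (j::j'::t').length * rr + 1 = rr + (j'::t').length * rr + 1 := by
        simp only [List.length_cons]
        ring
      rw [hlen]
      simpa using hstep

end Final

/-- let `i ∈ I`, `r ≥ 2`, and let `S ⊆ I ∖ {i}` be nonempty with
`(α_j,α_{j'}) = 0` for distinct `j,j' ∈ S` and `a_{ij} = 1−r` for all `j ∈ S`.  With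
`n−1 = |S|`, `L = (n−1)(r−1)+1`, and any enumeration `j_1,…,j_{n−1}` of `S` (given by a
duplicate-free list `l`), one has
`Σ_{k=0}^{L} (−1)^k [L ¦ k]_{d_i} f_i^k f_{j_1}⋯f_{j_{n−1}} f_i^{L−k} = 0` in `U_q^-`. -/
theorem stmt16 {I : Type} [Fintype I] [DecidableEq I] [Nonempty I]
    (form : I → I → ℤ)
    (hsymm : ∀ i j, form i j = form j i)
    (hdiag_pos : ∀ i, 0 < form i i) (hdiag_even : ∀ i, 2 ∣ form i i)
    (hoff : ∀ i j, i ≠ j → 2 * form i j ≤ 0 ∧ form i i ∣ 2 * form i j)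
    (i : I) (r : ℕ) (hr : 2 ≤ r)
    (S : Finset I) (hSne : S.Nonempty) (hiS : i ∉ S)
    (horth : ∀ j ∈ S, ∀ j' ∈ S, j ≠ j' → form j j' = 0)
    (haij : ∀ j ∈ S, aij form i j = 1 - (r : ℤ))
    (l : List I) (hlnd : l.Nodup) (hlS : l.toFinset = S) :
    ∑ k ∈ Finset.range (S.card * (r - 1) + 1 + 1),
      ((-1 : K) ^ k * qbinomd (dd form i) ((S.card * (r - 1) + 1 : ℕ) : ℤ) k) •
        ((fgen form i) ^ k * (l.map (fgen form)).prod *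
          (fgen form i) ^ (S.card * (r - 1) + 1 - k)) = 0 := by
  classical
  have hd : 0 < dd form i := by
    obtain ⟨c, hc⟩ := hdiag_even i
    have h1 : 0 < form i i := hdiag_pos i
    rw [dd, hc, Int.mul_ediv_cancel_left _ (by norm_num : (2:ℤ) ≠ 0)]
    omega
  obtain ⟨rr, hrr⟩ : ∃ rr, r = rr + 1 := ⟨r - 1, by omega⟩
  have hne : l ≠ [] := by
    intro h
    rw [h] at hlS
    simp only [List.toFinset_nil] at hlS
    rw [← hlS] at hSne
    simpa using hSne
  have hall : ∀ j ∈ l, Hrel (A := Uneg form) (dd form i) (fgen form i) (fgen form j) (rr+1) := by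
    intro j hj
    have hjS : j ∈ S := by rw [← hlS]; exact List.mem_toFinset.2 hj
    have hij : i ≠ j := fun h => hiS (h ▸ hjS)
    refine serre_to_Hrel form i j hij (rr+1) ?_
    rw [haij j hjS, hrr]
  have hres := list_Hrel form i hd rr l hne hall
  have hcard : S.card = l.length := by rw [← hlS, List.toFinset_card_of_nodup hlnd]
  have hr1 : r - 1 = rr := by omega
  rw [hcard, hr1]
  have hfin := hres 0 0
  simpa using hfin
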